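/- For every mechanism J on tie-free profiles that is ordinal and truthful, there exists a mechanism J' on tie-free profiles that is ordinal, neutral, anonymous and truthful and satisfies ratio_U(J') ≥ ratio_U(J). -/

import Mathlib

open Finset

/-- A normalized preference function: maps into `[0,1]` and attains both `0` and `1`. -/
def IsPref {m : ℕ} (u : Fin m → ℝ) : Prop :=
  (∀ j, 0 ≤ u j ∧ u j ≤ 1) ∧ (∃ j, u j = 0) ∧ (∃ j, u j = 1)

/-- A tie-free normalized preference function. -/
def IsPrefU {m : ℕ} (u : Fin m → ℝ) : Prop :=
  IsPref u ∧ Function.Injective u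

/-- A profile of normalized preference functions. -/
def IsProfile {n m : ℕ} (u : Fin n → Fin m → ℝ) : Prop :=
  ∀ i, IsPref (u i)

/-- A tie-free profile. -/
def IsProfileU {n m : ℕ} (u : Fin n → Fin m → ℝ) : Prop :=
  ∀ i, IsPrefU (u i)

/-- `p` is a probability distribution over the `m` candidates. -/
def IsDist {m : ℕ} (p : Fin m → ℝ) : Prop :=
  (∀ j, 0 ≤ p j) ∧ ∑ j, p j = 1

/-- Social welfare of candidate `j` under profile `u`. -/
def Wel {n m : ℕ} (j : Fin m) (u : Fin n → Fin m → ℝ) : ℝ :=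
  ∑ i, u i j

/-- Range voting: the candidate of maximal social welfare, ties broken
toward the smaller index. -/
noncomputable def RV {n m : ℕ} (hm : 0 < m) (u : Fin n → Fin m → ℝ) : Fin m :=
  (Finset.univ.filter fun j => ∀ j', Wel j' u ≤ Wel j u).min' (by
    obtain ⟨j, -, hj⟩ := Finset.exists_max_image (Finset.univ : Finset (Fin m))
      (fun j => Wel j u) ⟨⟨0, hm⟩, Finset.mem_univ _⟩
    exact ⟨j, Finset.mem_filter.2 ⟨Finset.mem_univ _, fun j' => hj j' (Finset.mem_univ _)⟩⟩)

/-- Expected social welfare of a randomized mechanism `J` (given as the map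
sending a profile to the probability of each candidate winning). -/
noncomputable def expWel {n m : ℕ} (J : (Fin n → Fin m → ℝ) → Fin m → ℝ)
    (u : Fin n → Fin m → ℝ) : ℝ :=
  ∑ j, J u j * Wel j u

/-- Rank of candidate `j` in preference `v`, ties broken in favor of the
smaller candidate index (the most preferred candidate has rank 1). -/
noncomputable def rnk {m : ℕ} (v : Fin m → ℝ) (j : Fin m) : ℕ :=
  (Finset.univ.filter fun j' => v j < v j' ∨ (v j' = v j ∧ j' ≤ j)).card

/-- The mechanism `J^{1,q}`: pick a voter uniformly at random, then a winner
uniformly at random among that voter's `q` most preferred candidates. -/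
noncomputable def Jone (q : ℕ) {n m : ℕ} (u : Fin n → Fin m → ℝ) : Fin m → ℝ :=
  fun j => (∑ i : Fin n, if rnk (u i) j ≤ q then ((q : ℝ))⁻¹ else 0) / (n : ℝ)

/-- `⌊m^{1/3}⌋`. -/
noncomputable def mroot3 (m : ℕ) : ℕ := ⌊(m : ℝ) ^ ((1 : ℝ)/3)⌋₊

/-- The mechanism `J*`, running `J^{1,1}` and `J^{1,⌊m^{1/3}⌋}` each with
probability `1/2`. -/
noncomputable def Jstar {n m : ℕ} (u : Fin n → Fin m → ℝ) : Fin m → ℝ :=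
  fun j => (Jone 1 u j + Jone (mroot3 m) u j) / 2

/-- Voter with preference `v` prefers `j₀` to `j₁` (ties toward the smaller
candidate index). -/
def Prefers {m : ℕ} (v : Fin m → ℝ) (j₀ j₁ : Fin m) : Prop :=
  v j₁ < v j₀ ∨ (v j₀ = v j₁ ∧ j₀ < j₁)

noncomputable instance {m : ℕ} (v : Fin m → ℝ) (j₀ j₁ : Fin m) :
    Decidable (Prefers v j₀ j₁) := by unfold Prefers; infer_instance

/-- The mechanism `J^{2,q}`: pick two distinct candidates uniformly at random,
let each voter vote for the one it prefers; if one of the two gets at least `q`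
votes it wins, otherwise the winner is one of the two by a fair coin. -/
noncomputable def Jtwo (q : ℕ) {n m : ℕ} (u : Fin n → Fin m → ℝ) : Fin m → ℝ :=
  fun j =>
    (∑ j₀ : Fin m, ∑ j₁ : Fin m,
      if j₀ = j₁ then 0
      else
        if q ≤ (Finset.univ.filter fun i => Prefers (u i) j₀ j₁).card then
          (if j = j₀ then (1 : ℝ) else 0)
        else if q ≤ n - (Finset.univ.filter fun i => Prefers (u i) j₀ j₁).card then
          (if j = j₁ then (1 : ℝ) else 0)
        else ((if j = j₀ then (1 : ℝ)/2 else 0) + (if j = j₁ then (1 : ℝ)/2 else 0)))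
      / ((m * (m - 1) : ℕ) : ℝ)

/-- `J` assigns a probability distribution to every tie-free profile. -/
def MechU {n m : ℕ} (J : (Fin n → Fin m → ℝ) → Fin m → ℝ) : Prop :=
  ∀ u, IsProfileU u → IsDist (J u)

/-- Truthfulness (on tie-free profiles). -/
def Truthful {n m : ℕ} (J : (Fin n → Fin m → ℝ) → Fin m → ℝ) : Prop :=
  ∀ u, IsProfileU u → ∀ (i : Fin n) (v : Fin m → ℝ), IsPrefU v →
    ∑ j, J (Function.update u i v) j * u i j ≤ ∑ j, J u j * u i j

/-- Ordinality (on tie-free profiles). -/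
def OrdinalMech {n m : ℕ} (J : (Fin n → Fin m → ℝ) → Fin m → ℝ) : Prop :=
  ∀ u u' : Fin n → Fin m → ℝ, IsProfileU u → IsProfileU u' →
    (∀ i (j j' : Fin m), u i j < u i j' ↔ u' i j < u' i j') → J u = J u'

/-- Unilateral mechanism (on tie-free profiles): depends only on one voter. -/
def Unilateral {n m : ℕ} (J : (Fin n → Fin m → ℝ) → Fin m → ℝ) : Prop :=
  ∃ i : Fin n, ∀ u u' : Fin n → Fin m → ℝ, IsProfileU u → IsProfileU u' →
    u i = u' i → J u = J u'

/-- Duple mechanism (on tie-free profiles): supported on two fixed candidates. -/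
def Duple {n m : ℕ} (J : (Fin n → Fin m → ℝ) → Fin m → ℝ) : Prop :=
  ∃ j₀ j₁ : Fin m, j₀ ≠ j₁ ∧ ∀ u, IsProfileU u → ∀ j, j ≠ j₀ → j ≠ j₁ → J u j = 0

/-- Neutral mechanism (on tie-free profiles). -/
def Neutral {n m : ℕ} (J : (Fin n → Fin m → ℝ) → Fin m → ℝ) : Prop :=
  ∀ τ : Equiv.Perm (Fin m), ∀ u : Fin n → Fin m → ℝ, IsProfileU u →
    ∀ j, J (fun i => u i ∘ τ) j = J u (τ j)

/-- Anonymous mechanism (on tie-free profiles). -/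
def AnonymousMech {n m : ℕ} (J : (Fin n → Fin m → ℝ) → Fin m → ℝ) : Prop :=
  ∀ σ : Equiv.Perm (Fin n), ∀ u : Fin n → Fin m → ℝ, IsProfileU u →
    J (fun i => u (σ i)) = J u

/-- `ratio_U(J)`: infimum of the welfare ratio over tie-free profiles. -/
noncomputable def ratioU {n m : ℕ} (hm : 0 < m)
    (J : (Fin n → Fin m → ℝ) → Fin m → ℝ) : ℝ :=
  sInf {r | ∃ u, IsProfileU u ∧ r = expWel J u / Wel (RV hm u) u}

/-- `R_k`: tie-free normalized preferences taking values in `{0,1/k,…,1}`. -/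
def Rk {m : ℕ} (k : ℕ) (u : Fin m → ℝ) : Prop :=
  IsPrefU u ∧ ∀ j, ∃ t : ℕ, t ≤ k ∧ u j = (t : ℝ) / k

/-- `a(u)`: the number of `t ∈ {0,…,k-1}` such that exactly one of `t/k` and
`(t+1)/k` lies in the image of `u`. -/
noncomputable def aOf {m : ℕ} (k : ℕ) (u : Fin m → ℝ) : ℕ :=
  ((Finset.range k).filter fun t : ℕ =>
    ((∃ j : Fin m, u j = (t : ℝ) / k) ∧ ¬ (∃ j : Fin m, u j = ((t : ℝ) + 1) / k)) ∨
    ((∃ j : Fin m, u j = ((t : ℝ) + 1) / k) ∧ ¬ (∃ j : Fin m, u j = (t : ℝ) / k))).card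

/-- `C_k = {u ∈ R_k : a(u) = 2}`. -/
def Ck {m : ℕ} (k : ℕ) (u : Fin m → ℝ) : Prop :=
  Rk k u ∧ aOf k u = 2

/-- `count(u)`: the number of candidates with `u`-value above `1/2`. -/
noncomputable def countOf {m : ℕ} (u : Fin m → ℝ) : ℕ :=
  (Finset.univ.filter fun j => (1 : ℝ)/2 < u j).card

/-- `rank(u,j) = #{j' : u(j') ≥ u(j)}`. -/
noncomputable def rankOf {m : ℕ} (u : Fin m → ℝ) (j : Fin m) : ℕ :=
  (Finset.univ.filter fun j' => u j ≤ u j').card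

/-- `D_k = D_k^{(a)} ∪ D_k^{(b)} ∪ D_k^{(c)}` (`⟨0,hm⟩` is the first candidate). -/
def Dk {m : ℕ} (hm : 0 < m) (k : ℕ) (u : Fin m → ℝ) : Prop :=
  Ck k u ∧
    ((countOf u ≤ 2 ∧ (1 : ℝ)/2 < u ⟨0, hm⟩) ∨
     (countOf u = 1 ∧ mroot3 m < rankOf u ⟨0, hm⟩) ∨
     (countOf u = mroot3 m + 1 ∧ rankOf u ⟨0, hm⟩ = mroot3 m + 1))

/-- `g(u) = E[Wel(J*(u),u)] / Wel(1,u)` where `1` is the first candidate. -/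
noncomputable def gfun {n m : ℕ} (hm : 0 < m) (u : Fin n → Fin m → ℝ) : ℝ :=
  expWel Jstar u / Wel ⟨0, hm⟩ u

/-- The minimum (as an infimum) of `f` over profiles all of whose preference
functions satisfy `P`. -/
noncomputable def minOver {n m : ℕ} (P : (Fin m → ℝ) → Prop)
    (f : (Fin n → Fin m → ℝ) → ℝ) : ℝ :=
  sInf {r | ∃ u : Fin n → Fin m → ℝ, (∀ i, P (u i)) ∧ r = f u}



/-- The permuted profile `i ↦ u (σ i) ∘ τ`. -/
def pprof {n m : ℕ} (u : Fin n → Fin m → ℝ) (σ : Equiv.Perm (Fin n))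
    (τ : Equiv.Perm (Fin m)) : Fin n → Fin m → ℝ :=
  fun i => u (σ i) ∘ τ

lemma isPrefU_comp {m : ℕ} {v : Fin m → ℝ} (h : IsPrefU v) (τ : Equiv.Perm (Fin m)) :
    IsPrefU (v ∘ τ) := by
  obtain ⟨⟨hb, ⟨j0, h0⟩, ⟨j1, h1⟩⟩, hinj⟩ := h
  refine ⟨⟨fun j => hb (τ j), ⟨τ⁻¹ j0, by simp [h0]⟩, ⟨τ⁻¹ j1, by simp [h1]⟩⟩, ?_⟩
  exact hinj.comp τ.injective

lemma isProfileU_pprof {n m : ℕ} {u : Fin n → Fin m → ℝ} (h : IsProfileU u)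
    (σ : Equiv.Perm (Fin n)) (τ : Equiv.Perm (Fin m)) : IsProfileU (pprof u σ τ) :=
  fun i => isPrefU_comp (h (σ i)) τ

lemma pprof_update {n m : ℕ} (u : Fin n → Fin m → ℝ) (i : Fin n) (v : Fin m → ℝ)
    (σ : Equiv.Perm (Fin n)) (τ : Equiv.Perm (Fin m)) :
    pprof (Function.update u i v) σ τ
      = Function.update (pprof u σ τ) (σ⁻¹ i) (v ∘ τ) := by
  funext i'
  rcases eq_or_ne i' (σ⁻¹ i) with h | h
  · subst h
    simp only [pprof, Function.update_self]
    rw [show σ (σ⁻¹ i) = i from σ.apply_symm_apply i, Function.update_self]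
  · have h' : σ i' ≠ i := fun hc => h (by simp [← hc])
    rw [Function.update_of_ne h]
    simp [pprof, Function.update_of_ne h']

lemma sum_perm_inv {m : ℕ} (τ : Equiv.Perm (Fin m)) (p : Fin m → ℝ) :
    ∑ j, p (τ⁻¹ j) = ∑ j, p j := by
  rw [← Equiv.sum_comp τ (fun j => p (τ⁻¹ j))]; simp

lemma sum_perm_inv_mul {m : ℕ} (τ : Equiv.Perm (Fin m)) (p g : Fin m → ℝ) :
    ∑ j, p (τ⁻¹ j) * g j = ∑ j, p j * g (τ j) := by
  rw [← Equiv.sum_comp τ (fun j => p (τ⁻¹ j) * g j)]; simp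

lemma wel_le_RV {n m : ℕ} (hm : 0 < m) (u : Fin n → Fin m → ℝ) (j : Fin m) :
    Wel j u ≤ Wel (RV hm u) u := by
  have h : RV hm u ∈ Finset.univ.filter fun j => ∀ j', Wel j' u ≤ Wel j u :=
    Finset.min'_mem _ _
  exact (Finset.mem_filter.mp h).2 j

lemma wel_nonneg {n m : ℕ} {u : Fin n → Fin m → ℝ} (hu : IsProfileU u) (j : Fin m) :
    0 ≤ Wel j u :=
  Finset.sum_nonneg fun i _ => ((hu i).1.1 j).1

lemma wel_RV_pos {n m : ℕ} (hn : 1 ≤ n) (hm : 0 < m) {u : Fin n → Fin m → ℝ}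
    (hu : IsProfileU u) : 0 < Wel (RV hm u) u := by
  obtain ⟨j1, hj1⟩ := (hu ⟨0, hn⟩).1.2.2
  have h1 : (1 : ℝ) ≤ Wel j1 u := by
    rw [Wel, ← hj1]
    exact Finset.single_le_sum (fun i _ => ((hu i).1.1 j1).1) (Finset.mem_univ _)
  linarith [wel_le_RV hm u j1]

lemma wel_pprof {n m : ℕ} (u : Fin n → Fin m → ℝ) (σ : Equiv.Perm (Fin n))
    (τ : Equiv.Perm (Fin m)) (j : Fin m) : Wel j (pprof u σ τ) = Wel (τ j) u := by
  unfold Wel pprof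
  exact Equiv.sum_comp σ (fun i => u i (τ j))

lemma wel_RV_pprof {n m : ℕ} (hm : 0 < m) (u : Fin n → Fin m → ℝ)
    (σ : Equiv.Perm (Fin n)) (τ : Equiv.Perm (Fin m)) :
    Wel (RV hm (pprof u σ τ)) (pprof u σ τ) = Wel (RV hm u) u := by
  apply le_antisymm
  · rw [wel_pprof]; exact wel_le_RV hm u _
  · have := wel_le_RV hm (pprof u σ τ) (τ⁻¹ (RV hm u))
    rwa [wel_pprof, show τ (τ⁻¹ (RV hm u)) = RV hm u from τ.apply_symm_apply _] at this

/-- for every ordinal truthful mechanism `J` on tie-free profiles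
there is an ordinal, neutral, anonymous and truthful mechanism `J'` on
tie-free profiles with `ratio_U(J') ≥ ratio_U(J)`. -/
theorem stmt6 (n m : ℕ) (hn : 1 ≤ n) (hm : 2 ≤ m)
    (J : (Fin n → Fin m → ℝ) → Fin m → ℝ)
    (hJ : MechU J) (hOrd : OrdinalMech J) (hT : Truthful J) :
    ∃ J' : (Fin n → Fin m → ℝ) → Fin m → ℝ,
      MechU J' ∧ OrdinalMech J' ∧ Neutral J' ∧ AnonymousMech J' ∧ Truthful J' ∧
      ratioU (show 0 < m by omega) J ≤ ratioU (show 0 < m by omega) J' := by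
  have hm' : 0 < m := by omega
  set N : ℝ := ((Fintype.card (Equiv.Perm (Fin n)) * Fintype.card (Equiv.Perm (Fin m)) : ℕ) : ℝ)
    with hNdef
  have hN : 0 < N := by
    have := Fintype.card_pos (α := Equiv.Perm (Fin n))
    have := Fintype.card_pos (α := Equiv.Perm (Fin m))
    positivity
  set J' : (Fin n → Fin m → ℝ) → Fin m → ℝ :=
    fun u j => (∑ σ : Equiv.Perm (Fin n), ∑ τ : Equiv.Perm (Fin m),
      J (pprof u σ τ) (τ⁻¹ j)) / N with hJ'def
  refine ⟨J', ?_, ?_, ?_, ?_, ?_, ?_⟩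
  · -- MechU
    intro u hu
    constructor
    · intro j
      apply div_nonneg _ hN.le
      apply Finset.sum_nonneg; intro σ _
      apply Finset.sum_nonneg; intro τ _
      exact (hJ _ (isProfileU_pprof hu σ τ)).1 _
    · have heach : ∀ σ : Equiv.Perm (Fin n), ∀ τ : Equiv.Perm (Fin m),
          ∑ j, J (pprof u σ τ) (τ⁻¹ j) = 1 := by
        intro σ τ
        rw [sum_perm_inv]
        exact (hJ _ (isProfileU_pprof hu σ τ)).2
      calc ∑ j, J' u j
          = (∑ σ : Equiv.Perm (Fin n), ∑ τ : Equiv.Perm (Fin m),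
              ∑ j, J (pprof u σ τ) (τ⁻¹ j)) / N := by
            simp only [hJ'def]
            rw [← Finset.sum_div]
            congr 1
            rw [Finset.sum_comm]
            exact Finset.sum_congr rfl fun σ _ => Finset.sum_comm
        _ = 1 := by
            simp only [heach, Finset.sum_const, Finset.card_univ, nsmul_eq_mul, mul_one]
            rw [show ((Fintype.card (Equiv.Perm (Fin n)):ℝ)
                * (Fintype.card (Equiv.Perm (Fin m)):ℝ)) = N by
              rw [hNdef]; push_cast; ring]
            exact div_self hN.ne'
  · -- Ordinal
    intro u u' hu hu' hord
    funext j
    simp only [hJ'def]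
    congr 1
    apply Finset.sum_congr rfl; intro σ _
    apply Finset.sum_congr rfl; intro τ _
    rw [hOrd _ _ (isProfileU_pprof hu σ τ) (isProfileU_pprof hu' σ τ)
      (fun i j j' => hord (σ i) (τ j) (τ j'))]
  · -- Neutral
    intro τ₀ u hu j
    simp only [hJ'def]
    congr 1
    apply Finset.sum_congr rfl; intro σ _
    have step : ∀ τ : Equiv.Perm (Fin m),
        J (pprof (fun i => u i ∘ τ₀) σ τ) (τ⁻¹ j)
          = J (pprof u σ (τ₀ * τ)) ((τ₀ * τ)⁻¹ (τ₀ j)) := by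
      intro τ
      have e1 : pprof (fun i => u i ∘ τ₀) σ τ = pprof u σ (τ₀ * τ) := by
        funext i x; simp [pprof]
      have e2 : (τ₀ * τ)⁻¹ (τ₀ j) = τ⁻¹ j := by
        simp [mul_inv_rev]
      rw [e1, e2]
    simp only [step]
    exact Equiv.sum_comp (Equiv.mulLeft τ₀)
      (fun τ => J (pprof u σ τ) (τ⁻¹ (τ₀ j)))
  · -- Anonymous
    intro σ₀ u hu
    funext j
    simp only [hJ'def]
    congr 1
    have step : ∀ σ : Equiv.Perm (Fin n),
        (∑ τ : Equiv.Perm (Fin m), J (pprof (fun i => u (σ₀ i)) σ τ) (τ⁻¹ j))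
          = ∑ τ : Equiv.Perm (Fin m), J (pprof u (σ₀ * σ) τ) (τ⁻¹ j) := by
      intro σ
      apply Finset.sum_congr rfl; intro τ _
      have e1 : pprof (fun i => u (σ₀ i)) σ τ = pprof u (σ₀ * σ) τ := by
        funext i; simp [pprof]
      rw [e1]
    simp only [step]
    exact Equiv.sum_comp (Equiv.mulLeft σ₀)
      (fun σ => ∑ τ : Equiv.Perm (Fin m), J (pprof u σ τ) (τ⁻¹ j))
  · -- Truthful
    intro u hu i v hv
    have key : ∀ σ : Equiv.Perm (Fin n), ∀ τ : Equiv.Perm (Fin m),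
        ∑ j, J (pprof (Function.update u i v) σ τ) (τ⁻¹ j) * u i j
          ≤ ∑ j, J (pprof u σ τ) (τ⁻¹ j) * u i j := by
      intro σ τ
      rw [sum_perm_inv_mul, sum_perm_inv_mul]
      have h1 : (fun j => u i (τ j)) = pprof u σ τ (σ⁻¹ i) := by
        funext j; simp [pprof]
      have h2 : pprof (Function.update u i v) σ τ
          = Function.update (pprof u σ τ) (σ⁻¹ i) (v ∘ τ) := pprof_update u i v σ τ
      calc ∑ j, J (pprof (Function.update u i v) σ τ) j * u i (τ j)
          = ∑ j, J (Function.update (pprof u σ τ) (σ⁻¹ i) (v ∘ τ)) j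
              * pprof u σ τ (σ⁻¹ i) j := by
            apply Finset.sum_congr rfl; intro j _
            rw [h2, ← h1]
        _ ≤ ∑ j, J (pprof u σ τ) j * pprof u σ τ (σ⁻¹ i) j :=
            hT (pprof u σ τ) (isProfileU_pprof hu σ τ) (σ⁻¹ i) (v ∘ τ)
              (isPrefU_comp hv τ)
        _ = ∑ j, J (pprof u σ τ) j * u i (τ j) := by
            apply Finset.sum_congr rfl; intro j _
            rw [← h1]
    have expand : ∀ w : Fin n → Fin m → ℝ,
        ∑ j, J' w j * u i j
          = (∑ σ : Equiv.Perm (Fin n), ∑ τ : Equiv.Perm (Fin m),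
              ∑ j, J (pprof w σ τ) (τ⁻¹ j) * u i j) / N := by
      intro w
      simp only [hJ'def]
      calc ∑ j, (∑ σ : Equiv.Perm (Fin n), ∑ τ : Equiv.Perm (Fin m),
              J (pprof w σ τ) (τ⁻¹ j)) / N * u i j
          = ∑ j, (∑ σ : Equiv.Perm (Fin n), ∑ τ : Equiv.Perm (Fin m),
              J (pprof w σ τ) (τ⁻¹ j) * u i j) / N := by
            apply Finset.sum_congr rfl; intro j _
            rw [div_mul_eq_mul_div, Finset.sum_mul]
            congr 1
            exact Finset.sum_congr rfl fun σ _ => Finset.sum_mul _ _ _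
        _ = _ := by
            rw [← Finset.sum_div]
            congr 1
            rw [Finset.sum_comm]
            exact Finset.sum_congr rfl fun σ _ => Finset.sum_comm
    rw [expand, expand, div_le_div_iff_of_pos_right hN]
    exact Finset.sum_le_sum fun σ _ => Finset.sum_le_sum fun τ _ => key σ τ
  · -- ratio bound
    show ratioU hm' J ≤ ratioU hm' J'
    have hbdd : BddBelow {r | ∃ u, IsProfileU u ∧ r = expWel J u / Wel (RV hm' u) u} := by
      refine ⟨0, ?_⟩
      rintro r ⟨u, hu, rfl⟩
      apply div_nonneg
      · exact Finset.sum_nonneg fun j _ => mul_nonneg ((hJ u hu).1 j) (wel_nonneg hu j)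
      · exact (wel_RV_pos hn hm' hu).le
    have hRlow : ∀ u : Fin n → Fin m → ℝ, IsProfileU u →
        ratioU hm' J ≤ expWel J u / Wel (RV hm' u) u := fun u hu =>
      csInf_le hbdd ⟨u, hu, rfl⟩
    have hm1 : (0:ℝ) < (m:ℝ) - 1 := by
      have h2 : (2:ℝ) ≤ (m:ℝ) := by exact_mod_cast hm
      linarith
    set u0 : Fin n → Fin m → ℝ := fun _ j => (j : ℝ) / ((m:ℝ) - 1) with hu0def
    have hu0 : IsProfileU u0 := by
      intro i
      refine ⟨⟨fun j => ⟨by positivity, ?_⟩, ⟨⟨0, hm'⟩, by simp [hu0def]⟩,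
        ⟨⟨m-1, by omega⟩, ?_⟩⟩, ?_⟩
      · rw [div_le_one hm1]
        have hle : ((j:ℕ):ℝ) + 1 ≤ (m:ℝ) := by exact_mod_cast Nat.succ_le_of_lt j.isLt
        linarith
      · show ((m - 1 : ℕ) : ℝ) / ((m:ℝ) - 1) = 1
        rw [Nat.cast_sub (by omega : 1 ≤ m), Nat.cast_one, div_self hm1.ne']
      · intro a b hab
        simp only [hu0def] at hab
        rw [div_eq_div_iff hm1.ne' hm1.ne'] at hab
        have : ((a:ℕ):ℝ) = ((b:ℕ):ℝ) := by
          have := mul_right_cancel₀ hm1.ne' hab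
          exact this
        exact Fin.ext (by exact_mod_cast this)
    have hrfl : ratioU hm' J' = sInf {r | ∃ u, IsProfileU u ∧
        r = expWel J' u / Wel (RV hm' u) u} := rfl
    rw [hrfl]
    apply le_csInf
    · exact ⟨_, u0, hu0, rfl⟩
    · rintro r ⟨u, hu, rfl⟩
      set W := Wel (RV hm' u) u with hW
      have hWpos : 0 < W := wel_RV_pos hn hm' hu
      have hstep : ∀ (σ : Equiv.Perm (Fin n)) (τ : Equiv.Perm (Fin m)),
          ratioU hm' J * W ≤ expWel J (pprof u σ τ) := by
        intro σ τ
        have h1 := hRlow (pprof u σ τ) (isProfileU_pprof hu σ τ)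
        rw [wel_RV_pprof hm' u σ τ, ← hW] at h1
        have hd : ratioU hm' J ≤ expWel J (pprof u σ τ) / W := h1
        calc ratioU hm' J * W ≤ (expWel J (pprof u σ τ) / W) * W := by
              exact mul_le_mul_of_nonneg_right hd hWpos.le
          _ = expWel J (pprof u σ τ) := div_mul_cancel₀ _ hWpos.ne'
      have hexp : expWel J' u = (∑ σ : Equiv.Perm (Fin n), ∑ τ : Equiv.Perm (Fin m),
          expWel J (pprof u σ τ)) / N := by
        unfold expWel
        calc ∑ j, J' u j * Wel j u
            = ∑ j, (∑ σ : Equiv.Perm (Fin n), ∑ τ : Equiv.Perm (Fin m),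
                J (pprof u σ τ) (τ⁻¹ j) * Wel j u) / N := by
              apply Finset.sum_congr rfl; intro j _
              simp only [hJ'def]
              rw [div_mul_eq_mul_div, Finset.sum_mul]
              congr 1
              exact Finset.sum_congr rfl fun σ _ => Finset.sum_mul _ _ _
          _ = (∑ σ : Equiv.Perm (Fin n), ∑ τ : Equiv.Perm (Fin m),
                ∑ j, J (pprof u σ τ) (τ⁻¹ j) * Wel j u) / N := by
              rw [← Finset.sum_div]
              congr 1
              rw [Finset.sum_comm]
              exact Finset.sum_congr rfl fun σ _ => Finset.sum_comm
          _ = _ := by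
              congr 1
              apply Finset.sum_congr rfl; intro σ _
              apply Finset.sum_congr rfl; intro τ _
              rw [sum_perm_inv_mul]
              apply Finset.sum_congr rfl; intro j _
              rw [wel_pprof]
      rw [le_div_iff₀ hWpos, hexp, le_div_iff₀ hN]
      calc ratioU hm' J * W * N
          = ∑ _σ : Equiv.Perm (Fin n), ∑ _τ : Equiv.Perm (Fin m), ratioU hm' J * W := by
            simp only [Finset.sum_const, Finset.card_univ, nsmul_eq_mul, hNdef]
            push_cast
            ring
        _ ≤ ∑ σ : Equiv.Perm (Fin n), ∑ τ : Equiv.Perm (Fin m),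
              expWel J (pprof u σ τ) :=
            Finset.sum_le_sum fun σ _ => Finset.sum_le_sum fun τ _ => hstep σ τ
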